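/- A strategy profile p with counts (u_i, v_i) is a Nash equilibrium if and only if: (i) for all i with u_i > 0, q̄(u_i + v_i q̄) ≤ u_{i*} + v_{i*} q̄ + q̄ + qμ/φ, and (ii) for all i, l such that some user at s_i relays through s_l, u_l + v_l q̄ ≤ min{ q̄(u_i + 1 + v_i q̄) - qμ/φ, u_{i*} + v_{i*} q̄ + q̄ }, where i* minimizes u_i + v_i q̄ over i ∈ [m]. -/
import Mathlib


open Finset

/-- A pure routing profile in the loss network with `m` sources, where source `i`
has `n i` users: `u i` users at source `i` choose the direct path, and `r i j`
users at source `i` relay through source `j` (indirect path `(s_i, s_j, d)`). -/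
structure Profile (m : ℕ) (n : Fin m → ℕ) where
  u : Fin m → ℕ
  r : Fin m → Fin m → ℕ
  diag : ∀ i, r i i = 0
  total : ∀ i, u i + ∑ j, r i j = n i

namespace Profile

variable {m : ℕ} {n : Fin m → ℕ}

/-- Number of users relaying through source `j`. -/
def v (p : Profile m n) (j : Fin m) : ℕ := ∑ i, p.r i j

/-- Traffic rate on the direct link `(s_i, d)`: `T_i = u_i φ + v_i q̄ φ`,
where `q̄` is the sidelink success probability. -/
noncomputable def T (φ qb : ℝ) (p : Profile m n) (i : Fin m) : ℝ :=
  (p.u i : ℝ) * φ + (p.v i : ℝ) * qb * φ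

/-- Total traffic rate arriving at the destination: `TR = Σ_i μ T_i/(T_i + μ)`. -/
noncomputable def TR (φ qb μ : ℝ) (p : Profile m n) : ℝ :=
  ∑ i, μ * p.T φ qb i / (p.T φ qb i + μ)

/-- Nash equilibrium: no single user can strictly decrease its loss rate by a
unilateral change of route.  A direct user at `s_i` (present iff `u i > 0`) may
deviate to the indirect path via any `j ≠ i`; a user at `s_i` relaying via `l`
(present iff `r i l > 0`) may deviate to its direct path or to the indirect path
via any other `j`.  Loss rates follow the loss-network formulas, with the traffic
of the target link adjusted for the deviating user's own flow. -/
noncomputable def isNE (φ q μ : ℝ) (p : Profile m n) : Prop :=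
  (∀ i j : Fin m, j ≠ i → 0 < p.u i →
      φ * p.T φ (1 - q) i / (p.T φ (1 - q) i + μ) ≤
        q * φ + (1 - q) * φ * (p.T φ (1 - q) j + (1 - q) * φ) /
          (p.T φ (1 - q) j + (1 - q) * φ + μ)) ∧
  (∀ i l : Fin m, l ≠ i → 0 < p.r i l →
      (q * φ + (1 - q) * φ * p.T φ (1 - q) l / (p.T φ (1 - q) l + μ) ≤
        φ * (p.T φ (1 - q) i + φ) / (p.T φ (1 - q) i + φ + μ)) ∧
      (∀ j : Fin m, j ≠ i → j ≠ l →
        q * φ + (1 - q) * φ * p.T φ (1 - q) l / (p.T φ (1 - q) l + μ) ≤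
          q * φ + (1 - q) * φ * (p.T φ (1 - q) j + (1 - q) * φ) /
            (p.T φ (1 - q) j + (1 - q) * φ + μ)))

end Profile

lemma aux_div {φ : ℝ} (hφ : 0 < φ) (A B c : ℝ) :
    A ≤ B + c / φ ↔ A * φ ≤ B * φ + c := by
  rw [← sub_le_iff_le_add', le_div_iff₀ hφ, sub_mul, sub_le_iff_le_add']

lemma aux_div_sub {φ : ℝ} (hφ : 0 < φ) (A B c : ℝ) :
    A ≤ B - c / φ ↔ A * φ ≤ B * φ - c := by
  have := aux_div hφ A B (-c)
  simpa [sub_eq_add_neg, neg_div] using this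

lemma L1 {φ μ q : ℝ} (hφ : 0 < φ) (hμ : 0 < μ) (hq0 : 0 < q) (hq1 : q < 1)
    (a b : ℝ) (ha : 0 ≤ a) (hb : 0 ≤ b) :
    φ * a / (a + μ) ≤ q * φ + (1 - q) * φ * b / (b + μ) ↔ (1 - q) * a ≤ b + q * μ := by
  have hA : 0 < a + μ := by linarith
  have hB : 0 < b + μ := by linarith
  have key : q * φ + (1 - q) * φ * b / (b + μ) = φ * (b + q * μ) / (b + μ) := by
    field_simp; ring
  rw [key, div_le_div_iff₀ hA hB]
  constructor <;> intro h <;> nlinarith [mul_pos hφ hμ]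

lemma L2 {φ μ q : ℝ} (hφ : 0 < φ) (hμ : 0 < μ) (hq0 : 0 < q) (hq1 : q < 1)
    (a c : ℝ) (ha : 0 ≤ a) (hc : 0 ≤ c) :
    q * φ + (1 - q) * φ * a / (a + μ) ≤ φ * c / (c + μ) ↔ a ≤ (1 - q) * c - q * μ := by
  have hA : 0 < a + μ := by linarith
  have hC : 0 < c + μ := by linarith
  have key : q * φ + (1 - q) * φ * a / (a + μ) = φ * (a + q * μ) / (a + μ) := by
    field_simp; ring
  rw [key, div_le_div_iff₀ hA hC]
  constructor <;> intro h <;> nlinarith [mul_pos hφ hμ]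

lemma L3 {φ μ q : ℝ} (hφ : 0 < φ) (hμ : 0 < μ) (hq0 : 0 < q) (hq1 : q < 1)
    (a b : ℝ) (ha : 0 ≤ a) (hb : 0 ≤ b) :
    q * φ + (1 - q) * φ * a / (a + μ) ≤ q * φ + (1 - q) * φ * b / (b + μ) ↔ a ≤ b := by
  have hA : 0 < a + μ := by linarith
  have hB : 0 < b + μ := by linarith
  have k1 : q * φ + (1 - q) * φ * a / (a + μ) = φ * (a + q * μ) / (a + μ) := by
    field_simp; ring
  have k2 : q * φ + (1 - q) * φ * b / (b + μ) = φ * (b + q * μ) / (b + μ) := by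
    field_simp; ring
  rw [k1, k2, div_le_div_iff₀ hA hB]
  constructor <;> intro h <;>
    nlinarith [mul_pos (mul_pos hφ hμ) (show (0:ℝ) < 1 - q by linarith)]


/-- Characterization of Nash equilibria.  Let `i*` minimize `u_i + v_i q̄` over all
sources.  A profile `p` is a Nash equilibrium iff:
(i) for all `i` with `u i > 0`, `q̄(u_i + v_i q̄) ≤ u_{i*} + v_{i*} q̄ + q̄ + qμ/φ`; and
(ii) for all `i, l` such that some user at `s_i` relays through `s_l`,
`u_l + v_l q̄ ≤ min { q̄(u_i + 1 + v_i q̄) - qμ/φ , u_{i*} + v_{i*} q̄ + q̄ }`. -/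
theorem NE_characterization {m : ℕ} {n : Fin m → ℕ} (φ μ q : ℝ)
    (hφ : 0 < φ) (hμ : 0 < μ) (hq0 : 0 < q) (hq1 : q < 1)
    (p : Profile m n) (istar : Fin m)
    (hstar : ∀ j : Fin m,
      (p.u istar : ℝ) + (p.v istar : ℝ) * (1 - q) ≤
        (p.u j : ℝ) + (p.v j : ℝ) * (1 - q)) :
    p.isNE φ q μ ↔
      ((∀ i : Fin m, 0 < p.u i →
          (1 - q) * ((p.u i : ℝ) + (p.v i : ℝ) * (1 - q)) ≤
            (p.u istar : ℝ) + (p.v istar : ℝ) * (1 - q) + (1 - q) + q * μ / φ) ∧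
       (∀ i l : Fin m, l ≠ i → 0 < p.r i l →
          (p.u l : ℝ) + (p.v l : ℝ) * (1 - q) ≤
            min ((1 - q) * ((p.u i : ℝ) + 1 + (p.v i : ℝ) * (1 - q)) - q * μ / φ)
              ((p.u istar : ℝ) + (p.v istar : ℝ) * (1 - q) + (1 - q)))) := by
  have hq' : (0:ℝ) < 1 - q := by linarith
  have hx0 : ∀ i, (0:ℝ) ≤ (p.u i : ℝ) + (p.v i : ℝ) * (1 - q) := fun i =>
    add_nonneg (Nat.cast_nonneg _) (mul_nonneg (Nat.cast_nonneg _) hq'.le)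
  have hT : ∀ i, p.T φ (1 - q) i = ((p.u i : ℝ) + (p.v i : ℝ) * (1 - q)) * φ := fun i => by
    simp only [Profile.T]; ring
  have hT0 : ∀ i, 0 ≤ p.T φ (1 - q) i := fun i => by
    rw [hT]; exact mul_nonneg (hx0 i) hφ.le
  have hqμ : 0 ≤ q * μ / φ := div_nonneg (mul_nonneg hq0.le hμ.le) hφ.le
  constructor
  · rintro ⟨h1, h2⟩
    constructor
    · intro i hui
      rw [aux_div hφ]
      by_cases hmi : istar = i
      · subst hmi
        nlinarith [hx0 istar, mul_nonneg (mul_nonneg hq0.le (hx0 istar)) hφ.le,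
          mul_nonneg hq'.le hφ.le, mul_nonneg hq0.le hμ.le]
      · have := (L1 hφ hμ hq0 hq1 _ _ (hT0 i)
          (add_nonneg (hT0 istar) (mul_nonneg hq'.le hφ.le))).mp (h1 i istar hmi hui)
        rw [hT i, hT istar] at this
        nlinarith
    · intro i l hli hril
      obtain ⟨ha, hb⟩ := h2 i l hli hril
      have ha' := (L2 hφ hμ hq0 hq1 _ _ (hT0 l) (add_nonneg (hT0 i) hφ.le)).mp ha
      rw [hT l, hT i] at ha'
      rw [le_min_iff]
      have part1 : (p.u l : ℝ) + (p.v l : ℝ) * (1 - q) ≤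
          (1 - q) * ((p.u i : ℝ) + 1 + (p.v i : ℝ) * (1 - q)) - q * μ / φ := by
        rw [aux_div_sub hφ]
        nlinarith
      refine ⟨part1, ?_⟩
      by_cases hml : istar = l
      · subst hml; linarith [hx0 istar]
      by_cases hmi : istar = i
      · subst hmi
        nlinarith [mul_nonneg (mul_nonneg hq0.le (hx0 istar)) hφ.le, hqμ,
          mul_nonneg hq0.le (hx0 istar)]
      · have := (L3 hφ hμ hq0 hq1 _ _ (hT0 l)
          (add_nonneg (hT0 istar) (mul_nonneg hq'.le hφ.le))).mp (hb istar hmi hml)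
        rw [hT l, hT istar] at this
        nlinarith
  · rintro ⟨h1, h2⟩
    constructor
    · intro i j hji hui
      apply (L1 hφ hμ hq0 hq1 _ _ (hT0 i)
        (add_nonneg (hT0 j) (mul_nonneg hq'.le hφ.le))).mpr
      rw [hT i, hT j]
      have hA := h1 i hui
      have hB := hstar j
      rw [aux_div hφ] at hA
      nlinarith
    · intro i l hli hril
      have h := h2 i l hli hril
      rw [le_min_iff] at h
      obtain ⟨hA, hB⟩ := h
      rw [aux_div_sub hφ] at hA
      constructor
      · apply (L2 hφ hμ hq0 hq1 _ _ (hT0 l) (add_nonneg (hT0 i) hφ.le)).mpr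
        rw [hT l, hT i]
        nlinarith
      · intro j hji hjl
        apply (L3 hφ hμ hq0 hq1 _ _ (hT0 l)
          (add_nonneg (hT0 j) (mul_nonneg hq'.le hφ.le))).mpr
        rw [hT l, hT j]
        have hBj := hstar j
        nlinarith
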